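/- Consider three agents and seven items o_1,...,o_7. The conflict graph consists of the complete bipartite graph K_{3,3} with parts X = {o_1, o_2, o_3} and Y = {o_4, o_5, o_6}, together with the two edges {o_1, o_7} and {o_4, o_7}. All three agents share the valuation v defined by: v(∅) = 0; v(S) = 1 if S = {o_1} or S = {o_4}; v(S) = 2 for every other singleton S; v(S) = 3 if S ∈ {{o_2,o_7}, {o_3,o_7}, {o_5,o_7}, {o_6,o_7}}; and v(S) = 4 for every other subset S of the items. Then v is monotone non-decreasing, and no allocation (A_1, A_2, A_3) is both maximal and EF1. -/
import Mathlib


/-- Conflict graph on seven items o_1,...,o_7 (indexed 0,...,6): the complete bipartite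
graph between X = {0,1,2} and Y = {3,4,5}, plus the edges {0,6} and {3,6}. -/
def adj13 (i j : Fin 7) : Prop :=
  (i.val < 3 ∧ 3 ≤ j.val ∧ j.val < 6) ∨ (j.val < 3 ∧ 3 ≤ i.val ∧ i.val < 6) ∨
  (i.val = 0 ∧ j.val = 6) ∨ (j.val = 0 ∧ i.val = 6) ∨
  (i.val = 3 ∧ j.val = 6) ∨ (j.val = 3 ∧ i.val = 6)

/-- The identical monotone valuation of the three agents. -/
noncomputable def v13 (S : Finset (Fin 7)) : ℝ :=
  if S = ∅ then 0
  else if S = {0} ∨ S = {3} then 1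
  else if S.card = 1 then 2
  else if S = {1, 6} ∨ S = {2, 6} ∨ S = {4, 6} ∨ S = {5, 6} then 3
  else 4

instance : DecidableRel adj13 := fun i j => by unfold adj13; infer_instance

/-- Natural-number copy of the valuation `v13`. -/
def w13 (S : Finset (Fin 7)) : ℕ :=
  if S = ∅ then 0
  else if S = {0} ∨ S = {3} then 1
  else if S.card = 1 then 2
  else if S = {1, 6} ∨ S = {2, 6} ∨ S = {4, 6} ∨ S = {5, 6} then 3
  else 4

lemma v13_eq_w (S : Finset (Fin 7)) : v13 S = (w13 S : ℝ) := by
  unfold v13 w13; split_ifs <;> norm_num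

def indep13 (s : Finset (Fin 7)) : Prop := ∀ x ∈ s, ∀ y ∈ s, ¬ adj13 x y

instance : DecidablePred indep13 := fun s => by unfold indep13; infer_instance

/-- EF1 condition (for the ℕ-valued valuation): agent with bundle `s` does not
envy bundle `t` after removal of at most one item. -/
def ef1w (s t : Finset (Fin 7)) : Prop :=
  w13 t ≤ w13 s ∨ ∃ x ∈ s ∪ t, w13 (t \ {x}) ≤ w13 (s \ {x})

instance : ∀ s t, Decidable (ef1w s t) := fun s t => by unfold ef1w; infer_instance

/-- The 22 independent sets of the conflict graph. -/
def L13 : List (Finset (Fin 7)) :=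
  [(∅ : Finset (Fin 7)), {0}, {1}, {2}, {3}, {4}, {5}, {6}, {0, 1}, {0, 2}, {1, 2},
   {1, 6}, {2, 6}, {3, 4}, {3, 5}, {4, 5}, {4, 6}, {5, 6}, {0, 1, 2}, {1, 2, 6},
   {3, 4, 5}, {4, 5, 6}]

set_option maxRecDepth 100000 in
set_option maxHeartbeats 4000000 in
lemma indep_mem13 : ∀ s : Finset (Fin 7), indep13 s → s ∈ L13 := by decide

set_option maxRecDepth 100000 in
set_option maxHeartbeats 4000000 in
lemma mono_w13 : ∀ S T : Finset (Fin 7), S ⊆ T → w13 S ≤ w13 T := by decide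

set_option maxRecDepth 1000000 in
set_option maxHeartbeats 8000000 in
set_option synthInstance.maxHeartbeats 1000000 in
set_option synthInstance.maxSize 4096 in
lemma core13 : ∀ a ∈ L13, ∀ b ∈ L13, ∀ c ∈ L13,
  ¬ (a ∩ b = ∅ ∧ a ∩ c = ∅ ∧ b ∩ c = ∅ ∧
     (∀ o : Fin 7, o ∉ a → o ∉ b → o ∉ c →
        (∃ x ∈ a, adj13 o x) ∧ (∃ x ∈ b, adj13 o x) ∧ (∃ x ∈ c, adj13 o x)) ∧
     ef1w a b ∧ ef1w b a ∧ ef1w a c ∧ ef1w c a ∧ ef1w b c ∧ ef1w c b) := by decide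

lemma ef1_conv {s t : Finset (Fin 7)}
    (h : ∃ S : Finset (Fin 7), S ⊆ s ∪ t ∧ S.card ≤ 1 ∧ v13 (s \ S) ≥ v13 (t \ S)) :
    ef1w s t := by
  obtain ⟨S, hsub, hcard, hge⟩ := h
  have hge' : w13 (t \ S) ≤ w13 (s \ S) := by
    have h2 := hge
    rw [ge_iff_le, v13_eq_w, v13_eq_w] at h2
    exact_mod_cast h2
  rcases S.eq_empty_or_nonempty with rfl | hne
  · left; simpa using hge'
  · have h1 : S.card = 1 := le_antisymm hcard (Finset.one_le_card.mpr hne)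
    obtain ⟨x, rfl⟩ := Finset.card_eq_one.mp h1
    right; exact ⟨x, hsub (Finset.mem_singleton_self x), hge'⟩

/-- v13 is monotone non-decreasing, and no allocation among three agents is
both maximal and EF1. -/
theorem stmt_13 :
    (∀ S T : Finset (Fin 7), S ⊆ T → v13 S ≤ v13 T) ∧
    ¬ ∃ A : Fin 3 → Finset (Fin 7),
      (∀ i j : Fin 3, i ≠ j → Disjoint (A i) (A j)) ∧
      (∀ i : Fin 3, ∀ x ∈ A i, ∀ y ∈ A i, ¬ adj13 x y) ∧
      (∀ o : Fin 7, (∀ i : Fin 3, o ∉ A i) → ∀ i : Fin 3, ∃ x ∈ A i, adj13 o x) ∧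
      (∀ i j : Fin 3, ∃ S : Finset (Fin 7), S ⊆ A i ∪ A j ∧ S.card ≤ 1 ∧
        v13 (A i \ S) ≥ v13 (A j \ S)) := by
  constructor
  · intro S T h
    rw [v13_eq_w, v13_eq_w]
    exact_mod_cast mono_w13 S T h
  · rintro ⟨A, hdisj, hindep, hmax, hef1⟩
    refine core13 (A 0) (indep_mem13 (A 0) (hindep 0)) (A 1) (indep_mem13 (A 1) (hindep 1))
      (A 2) (indep_mem13 (A 2) (hindep 2))
      ⟨Finset.disjoint_iff_inter_eq_empty.mp (hdisj 0 1 (by decide)),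
       Finset.disjoint_iff_inter_eq_empty.mp (hdisj 0 2 (by decide)),
       Finset.disjoint_iff_inter_eq_empty.mp (hdisj 1 2 (by decide)), ?_,
       ef1_conv (hef1 0 1), ef1_conv (hef1 1 0), ef1_conv (hef1 0 2),
       ef1_conv (hef1 2 0), ef1_conv (hef1 1 2), ef1_conv (hef1 2 1)⟩
    intro o h0 h1 h2
    have hno : ∀ i : Fin 3, o ∉ A i := by
      intro i; fin_cases i <;> assumption
    exact ⟨hmax o hno 0, hmax o hno 1, hmax o hno 2⟩
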